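/- arXiv:2501.13225 — 2 statements merged into one kernel-verified Lean document; each statement's English description precedes it below -/
import Mathlib

section
/- For the sign function, its dual function satisfies $\hat{\mathrm{sgn}}(\rho) = \frac{2}{\pi} \arcsin(\rho)$ for all $\rho \in [-1,1]$. -/
open MeasureTheory ProbabilityTheory Real

/-- The dual function of `f ∈ L²(N(0,1))`. -/
noncomputable def dualFn (f : ℝ → ℝ) (ρ : ℝ) : ℝ :=
  ∫ x, ∫ y, f x * f (ρ * x + Real.sqrt (1 - ρ ^ 2) * y)
    ∂(gaussianReal 0 1) ∂(gaussianReal 0 1)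

section aux

open intervalIntegral Set Filter Metric

noncomputable def phi (x : ℝ) : ℝ := (Real.sqrt (2 * π))⁻¹ * Real.exp (-x ^ 2 / 2)

lemma phi_eq : (fun x => gaussianPDFReal 0 1 x) = phi := by
  funext x
  simp [gaussianPDFReal, phi]

lemma continuous_phi : Continuous phi := by
  unfold phi
  fun_prop

lemma phi_nonneg (x : ℝ) : 0 ≤ phi x := by
  unfold phi; positivity

lemma phi_even (x : ℝ) : phi (-x) = phi x := by simp [phi]

lemma integrable_phi : Integrable phi := by
  have h := (integrable_exp_neg_mul_sq (by norm_num : (0:ℝ) < 1/2)).const_mul (Real.sqrt (2*π))⁻¹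
  refine h.congr (Filter.Eventually.of_forall fun x => ?_)
  unfold phi
  ring_nf

lemma integral_phi : ∫ x, phi x = 1 := by
  rw [← phi_eq]
  exact integral_gaussianPDFReal_eq_one 0 one_ne_zero

lemma measurable_realSign : Measurable Real.sign := by
  have : Real.sign = fun r : ℝ => if r < 0 then (-1:ℝ) else if 0 < r then 1 else 0 := by
    funext r; rfl
  rw [this]
  exact Measurable.ite measurableSet_Iio measurable_const
    (Measurable.ite (measurableSet_Ioi) measurable_const measurable_const)

lemma integral_gaussianReal_eq (g : ℝ → ℝ) :
    ∫ x, g x ∂(gaussianReal 0 1) = ∫ x, phi x * g x := by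
  rw [gaussianReal_of_var_ne_zero 0 one_ne_zero]
  have h1 : gaussianPDF 0 1 = fun x => ((gaussianPDFReal 0 1 x).toNNReal : ENNReal) := rfl
  rw [h1, integral_withDensity_eq_integral_smul
    ((measurable_gaussianPDFReal 0 1).real_toNNReal) g]
  congr 1
  funext x
  rw [NNReal.smul_def, Real.coe_toNNReal _ (gaussianPDFReal_nonneg 0 1 x)]
  simp [← phi_eq]

lemma integrable_gauss_of_bound (g : ℝ → ℝ) (C : ℝ) (hm : Measurable g)
    (hb : ∀ x, |g x| ≤ C) : Integrable g (gaussianReal 0 1) :=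
  Integrable.mono' (integrable_const C) hm.aestronglyMeasurable
    (Filter.Eventually.of_forall fun x => by simpa using hb x)

lemma integrable_abs_gauss : Integrable (fun x => |x|) (gaussianReal 0 1) := by
  rw [gaussianReal_of_var_ne_zero 0 one_ne_zero]
  have h1 : gaussianPDF 0 1 = fun x => ((gaussianPDFReal 0 1 x).toNNReal : ENNReal) := rfl
  rw [h1, integrable_withDensity_iff_integrable_smul
    ((measurable_gaussianPDFReal 0 1).real_toNNReal)]
  have h := ((integrable_mul_exp_neg_mul_sq (by norm_num : (0:ℝ) < 1/2)).abs).const_mul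
    (Real.sqrt (2*π))⁻¹
  refine h.congr (Filter.Eventually.of_forall fun x => ?_)
  show _ = (gaussianPDFReal 0 1 x).toNNReal • |x|
  rw [NNReal.smul_def, Real.coe_toNNReal _ (gaussianPDFReal_nonneg 0 1 x)]
  have hp : gaussianPDFReal 0 1 x = phi x := by rw [← phi_eq]
  rw [hp]
  unfold phi
  simp only [smul_eq_mul, abs_mul, abs_of_nonneg (Real.exp_pos _).le]
  ring_nf

noncomputable def G (u : ℝ) : ℝ := ∫ t in (-u)..u, phi t

lemma G_zero : G 0 = 0 := by simp [G]

lemma abs_G_le (u : ℝ) : |G u| ≤ 1 := by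
  have h1 : |G u| ≤ ∫ t in Set.uIoc (-u) u, |phi t| := by
    simpa [Real.norm_eq_abs, G] using intervalIntegral.norm_integral_le_integral_norm_uIoc
      (f := phi) (a := -u) (b := u) (μ := volume)
  have h2 : ∫ t in Set.uIoc (-u) u, |phi t| ≤ ∫ t, phi t := by
    have : ∀ t, |phi t| = phi t := fun t => abs_of_nonneg (phi_nonneg t)
    simp_rw [this]
    exact setIntegral_le_integral integrable_phi
      (Filter.Eventually.of_forall fun t => phi_nonneg t)
  calc |G u| ≤ _ := h1
    _ ≤ ∫ t, phi t := h2
    _ = 1 := integral_phi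

lemma hasDerivAt_G (u : ℝ) : HasDerivAt G (2 * phi u) u := by
  have key : ∀ v : ℝ, HasDerivAt (fun w => ∫ t in (0:ℝ)..w, phi t) (phi v) v := by
    intro v
    exact intervalIntegral.integral_hasDerivAt_right
      (continuous_phi.intervalIntegrable _ _)
      (continuous_phi.stronglyMeasurableAtFilter _ _)
      continuous_phi.continuousAt
  have hG : G = fun u => (∫ t in (0:ℝ)..u, phi t) - ∫ t in (0:ℝ)..(-u), phi t := by
    funext u
    rw [intervalIntegral.integral_interval_sub_left (continuous_phi.intervalIntegrable _ _)
      (continuous_phi.intervalIntegrable _ _)]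
    rfl
  rw [hG]
  have h2 : HasDerivAt (fun u : ℝ => ∫ t in (0:ℝ)..(-u), phi t) (-phi u) u := by
    have := (key (-u)).comp u (hasDerivAt_neg u)
    simpa [phi_even, Function.comp_def] using this
  have := (key u).sub h2
  exact this.congr_deriv (by ring)

lemma inner_eq (m s : ℝ) (hs : 0 < s) :
    ∫ y, Real.sign (m + s * y) ∂(gaussianReal 0 1) = G (m / s) := by
  rw [integral_gaussianReal_eq]
  set c : ℝ := -(m / s) with hc
  have hae : (fun y => phi y * Real.sign (m + s * y)) =ᵐ[volume]
      fun y => (Set.Ioi c).indicator phi y - (Set.Iio c).indicator phi y := by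
    have hms : s * (m / s) = m := by field_simp
    filter_upwards [compl_mem_ae_iff.2 (measure_singleton c)] with y hy
    have hyc : y ≠ c := by simpa using hy
    rcases lt_or_gt_of_ne hyc with h | h
    · have hneg : m + s * y < 0 := by
        have : y < -(m/s) := by rw [hc] at h; exact h
        nlinarith [mul_lt_mul_of_pos_left this hs]
      rw [Real.sign_of_neg hneg, Set.indicator_of_notMem (by simp [h.not_gt] : y ∉ Set.Ioi c),
        Set.indicator_of_mem (by simpa using h : y ∈ Set.Iio c)]
      ring
    · have hpos : 0 < m + s * y := by
        have : -(m/s) < y := by rw [hc] at h; exact h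
        nlinarith [mul_lt_mul_of_pos_left this hs]
      rw [Real.sign_of_pos hpos, Set.indicator_of_mem (by simpa using h : y ∈ Set.Ioi c),
        Set.indicator_of_notMem (by simp [h.le] : y ∉ Set.Iio c)]
      ring
  rw [integral_congr_ae hae, integral_sub
    (integrable_phi.indicator measurableSet_Ioi) (integrable_phi.indicator measurableSet_Iio),
    MeasureTheory.integral_indicator measurableSet_Ioi, MeasureTheory.integral_indicator measurableSet_Iio]
  have h1 : ∫ t in Set.Iio c, phi t = ∫ t in Set.Iic c, phi t :=
    setIntegral_congr_set Iio_ae_eq_Iic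
  have h2 : ∫ t in Set.Iic (-c), phi t = ∫ t in Set.Ioi c, phi t := by
    rw [← integral_comp_neg_Ioi]
    simp_rw [phi_even]
  have h3 : G (m / s) = (∫ t in Set.Iic (-c), phi t) - ∫ t in Set.Iic c, phi t := by
    rw [G]
    have : -(m/s) = c := rfl
    rw [this]
    have : m / s = -c := by rw [hc]; ring
    rw [this]
    exact intervalIntegral.integral_Iic_sub_Iic
      (integrable_phi.integrableOn) (integrable_phi.integrableOn) |>.symm
  rw [h3, h1, h2]

lemma integral_Ioi_mul_exp (b : ℝ) (hb : 0 < b) :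
    ∫ x in Set.Ioi (0:ℝ), x * Real.exp (-b * x ^ 2) = (2 * b)⁻¹ := by
  have A : ∀ x : ℝ, HasDerivAt (fun x => -(2 * b)⁻¹ * Real.exp (-b * x ^ 2))
      (x * Real.exp (-b * x ^ 2)) x := by
    intro x
    refine (((hasDerivAt_pow 2 x).const_mul (-b)).exp.const_mul (-(2 * b)⁻¹)).congr_deriv ?_
    field_simp
    ring
  have B : Tendsto (fun y : ℝ => -(2 * b)⁻¹ * Real.exp (-b * y ^ 2)) atTop
      (nhds (-(2 * b)⁻¹ * 0)) := by
    refine Tendsto.const_mul _ ?_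
    refine Real.tendsto_exp_atBot.comp ?_
    exact (tendsto_pow_atTop two_ne_zero).const_mul_atTop_of_neg (neg_lt_zero.2 hb)
  have := integral_Ioi_of_hasDerivAt_of_tendsto' (a := 0) (fun x _ => A x)
    (integrable_mul_exp_neg_mul_sq hb).integrableOn B
  rw [this]
  norm_num

lemma continuous_G : Continuous G :=
  continuous_iff_continuousAt.2 fun u => (hasDerivAt_G u).continuousAt

lemma abs_sign_le (x : ℝ) : |Real.sign x| ≤ 1 := by
  rcases Real.sign_apply_eq x with h | h | h <;> rw [h] <;> norm_num

lemma phi_le (x : ℝ) : phi x ≤ (Real.sqrt (2 * π))⁻¹ := by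
  unfold phi
  have h1 : Real.exp (-x ^ 2 / 2) ≤ 1 := by
    rw [Real.exp_le_one_iff]
    nlinarith [sq_nonneg x]
  nlinarith [inv_nonneg.2 (Real.sqrt_nonneg (2*π))]

lemma sign_mul_self' (x : ℝ) : Real.sign x * x = |x| := by
  rcases lt_trichotomy x 0 with h | h | h
  · rw [Real.sign_of_neg h, abs_of_neg h]; ring
  · simp [h]
  · rw [Real.sign_of_pos h, abs_of_pos h]; ring

noncomputable def F (a : ℝ) : ℝ :=
  ∫ x, Real.sign x * G (a * x) ∂(gaussianReal 0 1)

lemma hasDerivAt_F (a₀ : ℝ) : HasDerivAt F ((2 / π) * (a₀ ^ 2 + 1)⁻¹) a₀ := by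
  have hGm : ∀ b : ℝ, Measurable fun x : ℝ => Real.sign x * G (b * x) := fun b =>
    measurable_realSign.mul (Continuous.measurable
      (continuous_G.comp (continuous_const.mul continuous_id)))
  have hF'm : Measurable fun x : ℝ => Real.sign x * (2 * phi (a₀ * x) * x) :=
    measurable_realSign.mul (Continuous.measurable
      ((continuous_const.mul (continuous_phi.comp (continuous_const.mul continuous_id))).mul
        continuous_id))
  have key := hasDerivAt_integral_of_dominated_loc_of_deriv_le
    (μ := gaussianReal 0 1) (x₀ := a₀) (s := Metric.ball a₀ 1)
    (F := fun b x => Real.sign x * G (b * x))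
    (F' := fun b x => Real.sign x * (2 * phi (b * x) * x))
    (bound := fun x => 2 * (Real.sqrt (2 * π))⁻¹ * |x|)
    (Metric.ball_mem_nhds a₀ one_pos)
    (Filter.Eventually.of_forall fun b => (hGm b).aestronglyMeasurable)
    (integrable_gauss_of_bound _ 1 (hGm a₀)
      (fun x => by
        rw [abs_mul]
        calc |Real.sign x| * |G (a₀ * x)| ≤ 1 * 1 :=
          mul_le_mul (abs_sign_le x) (abs_G_le _) (abs_nonneg _) zero_le_one
        _ = 1 := mul_one 1))
    (hF'm.aestronglyMeasurable)
    (Filter.Eventually.of_forall fun x b _ => by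
      rw [Real.norm_eq_abs, abs_mul, abs_mul, abs_mul]
      have h1 : |Real.sign x| ≤ 1 := abs_sign_le x
      have h2 : |phi (b * x)| ≤ (Real.sqrt (2 * π))⁻¹ := by
        rw [abs_of_nonneg (phi_nonneg _)]; exact phi_le _
      have h3 : |(2:ℝ)| = 2 := by norm_num
      calc |Real.sign x| * (|(2:ℝ)| * |phi (b * x)| * |x|)
          ≤ 1 * (2 * (Real.sqrt (2 * π))⁻¹ * |x|) := by
            apply mul_le_mul h1 _ (by positivity) zero_le_one
            rw [h3]
            apply mul_le_mul_of_nonneg_right _ (abs_nonneg x)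
            exact mul_le_mul_of_nonneg_left h2 (by norm_num)
        _ = 2 * (Real.sqrt (2 * π))⁻¹ * |x| := one_mul _)
    ((integrable_abs_gauss.const_mul _))
    (Filter.Eventually.of_forall fun x b _ => by
      have h1 : HasDerivAt (fun b : ℝ => b * x) x b := hasDerivAt_mul_const x
      have h2 := (hasDerivAt_G (b * x)).comp b h1
      simpa [mul_comm, mul_assoc] using h2.const_mul (Real.sign x))
  obtain ⟨-, hF⟩ := key
  refine hF.congr_deriv ?_
  symm
  -- compute the value of the derivative integral
  rw [integral_gaussianReal_eq]
  set b : ℝ := (a₀ ^ 2 + 1) / 2 with hbdef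
  have hb : 0 < b := by positivity
  have hconst : (Real.sqrt (2 * π))⁻¹ * (Real.sqrt (2 * π))⁻¹ = (2 * π)⁻¹ := by
    rw [← mul_inv, Real.mul_self_sqrt (by positivity)]
  have hptwise : ∀ x : ℝ, phi x * (Real.sign x * (2 * phi (a₀ * x) * x))
      = π⁻¹ * (|x| * Real.exp (-b * x ^ 2)) := by
    intro x
    unfold phi
    have hs : Real.sign x * x = |x| := sign_mul_self' x
    have hexp : Real.exp (-x ^ 2 / 2) * Real.exp (-(a₀ * x) ^ 2 / 2)
        = Real.exp (-b * x ^ 2) := by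
      rw [← Real.exp_add]
      congr 1
      rw [hbdef]
      ring
    calc (Real.sqrt (2*π))⁻¹ * Real.exp (-x^2/2) *
          (Real.sign x * (2 * ((Real.sqrt (2*π))⁻¹ * Real.exp (-(a₀*x)^2/2)) * x))
        = 2 * ((Real.sqrt (2*π))⁻¹ * (Real.sqrt (2*π))⁻¹) *
          (Real.exp (-x^2/2) * Real.exp (-(a₀*x)^2/2)) * (Real.sign x * x) := by ring
      _ = 2 * (2*π)⁻¹ * Real.exp (-b * x^2) * |x| := by rw [hconst, hexp, hs]
      _ = π⁻¹ * (|x| * Real.exp (-b * x ^ 2)) := by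
          rw [mul_inv]
          ring
  simp_rw [hptwise]
  rw [MeasureTheory.integral_const_mul]
  have habs : ∫ x : ℝ, |x| * Real.exp (-b * x ^ 2) = b⁻¹ := by
    have h1 : ∫ x : ℝ, |x| * Real.exp (-b * x ^ 2)
        = ∫ x : ℝ, |x| * Real.exp (-b * |x| ^ 2) := by
      congr 1
      funext x
      rw [sq_abs]
    rw [h1, integral_comp_abs (f := fun t => t * Real.exp (-b * t ^ 2)),
      integral_Ioi_mul_exp b hb]
    field_simp
  rw [habs, hbdef]
  field_simp

lemma F_zero : F 0 = 0 := by
  unfold F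
  simp [G_zero]

lemma F_eq (a : ℝ) : F a = (2 / π) * Real.arctan a := by
  set H : ℝ → ℝ := fun a => F a - (2 / π) * Real.arctan a with hH
  have hderiv : ∀ b, HasDerivAt H 0 b := by
    intro b
    have h1 := (hasDerivAt_F b).sub ((Real.hasDerivAt_arctan b).const_mul (2 / π))
    refine h1.congr_deriv ?_
    symm
    have : 1 + b ^ 2 ≠ 0 := by positivity
    field_simp
    ring
  have hconst : H a = H 0 :=
    is_const_of_deriv_eq_zero (fun x => (hderiv x).differentiableAt)
      (fun x => (hderiv x).deriv) a 0
  have h0 : H 0 = 0 := by simp [hH, F_zero]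
  have := hconst.trans h0
  rw [hH] at this
  simpa [sub_eq_zero] using this

lemma gauss_singleton (c : ℝ) : gaussianReal 0 1 {c} = 0 :=
  gaussianReal_absolutelyContinuous 0 one_ne_zero (measure_singleton c)

end aux

section aux2
open intervalIntegral Set Filter Metric

theorem dual_sign (ρ : ℝ) (hρ : ρ ∈ Set.Icc (-1 : ℝ) 1) :
    dualFn Real.sign ρ = (2 / π) * Real.arcsin ρ := by
  obtain ⟨hl, hr⟩ := hρ
  rcases eq_or_lt_of_le hr with h1 | h1
  · -- ρ = 1
    subst h1
    unfold dualFn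
    have hs0 : Real.sqrt (1 - (1:ℝ) ^ 2) = 0 := by norm_num
    rw [hs0]
    have hinner : ∀ x : ℝ, (∫ y, Real.sign x * Real.sign (1 * x + 0 * y)
        ∂(gaussianReal 0 1)) = Real.sign x * Real.sign x := by
      intro x
      simp [MeasureTheory.integral_const]
    simp_rw [hinner]
    have hae : (fun x : ℝ => Real.sign x * Real.sign x) =ᵐ[gaussianReal 0 1]
        fun _ => (1:ℝ) := by
      filter_upwards [compl_mem_ae_iff.2 (gauss_singleton 0)] with x hx
      have hx0 : x ≠ 0 := by simpa using hx
      rcases Real.sign_apply_eq_of_ne_zero x hx0 with h | h <;> rw [h] <;> norm_num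
    rw [integral_congr_ae hae]
    simp [Real.arcsin_one]
  rcases eq_or_lt_of_le hl with h2 | h2
  · -- ρ = -1
    rw [← h2]
    unfold dualFn
    have hs0 : Real.sqrt (1 - (-1:ℝ) ^ 2) = 0 := by norm_num
    rw [hs0]
    have hinner : ∀ x : ℝ, (∫ y, Real.sign x * Real.sign (-1 * x + 0 * y)
        ∂(gaussianReal 0 1)) = Real.sign x * Real.sign (-x) := by
      intro x
      have h : ∀ y : ℝ, -1 * x + 0 * y = -x := fun y => by ring
      simp_rw [h]
      simp [MeasureTheory.integral_const]
    simp_rw [hinner]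
    have hae : (fun x : ℝ => Real.sign x * Real.sign (-x)) =ᵐ[gaussianReal 0 1]
        fun _ => (-1:ℝ) := by
      filter_upwards [compl_mem_ae_iff.2 (gauss_singleton 0)] with x hx
      have hx0 : x ≠ 0 := by simpa using hx
      rw [Real.sign_neg]
      rcases Real.sign_apply_eq_of_ne_zero x hx0 with h | h <;> rw [h] <;> norm_num
    rw [integral_congr_ae hae]
    simp [Real.arcsin_neg_one]
  -- -1 < ρ < 1
  have hpos : (0:ℝ) < 1 - ρ ^ 2 := by nlinarith
  have hs : 0 < Real.sqrt (1 - ρ ^ 2) := Real.sqrt_pos.2 hpos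
  set s : ℝ := Real.sqrt (1 - ρ ^ 2) with hsdef
  unfold dualFn
  have hinner : ∀ x : ℝ, (∫ y, Real.sign x * Real.sign (ρ * x + s * y)
      ∂(gaussianReal 0 1)) = Real.sign x * G ((ρ / s) * x) := by
    intro x
    rw [MeasureTheory.integral_const_mul, inner_eq (ρ * x) s hs]
    congr 2
    ring
  simp_rw [← hsdef, hinner]
  have : (∫ x, Real.sign x * G ((ρ / s) * x) ∂(gaussianReal 0 1)) = F (ρ / s) := rfl
  rw [this, F_eq, Real.arcsin_eq_arctan ⟨h2, h1⟩]

end aux2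
end

section
/- Let $a,b \in \mathbb{R}$ with $a^2+b^2 > 0$, $\sigma^2 = (a^2+b^2)^{-1}$, $\phi(s) = as+b|s|$, and $\Delta = \frac{b^2}{a^2+b^2}$. Then for all $\rho \in [-1,1]$, $\sigma^2 \hat{\phi}(\rho) = \rho + \Delta \frac{2}{\pi}(\sqrt{1-\rho^2} - \rho \arccos(\rho))$, where $\hat{\phi}$ is the dual function of $\phi$. -/
open MeasureTheory ProbabilityTheory Real

open intervalIntegral Filter
open scoped NNReal ENNReal



/-- Antiderivative of `cos θ * cos (θ - α)`. -/
lemma hasDerivAt_prim (α θ : ℝ) :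
    HasDerivAt (fun t => t * Real.cos α / 2 + Real.sin (2 * t - α) / 4)
      (Real.cos θ * Real.cos (θ - α)) θ := by
  have h1 : HasDerivAt (fun t : ℝ => 2 * t - α) 2 θ := by
    simpa using ((hasDerivAt_id θ).const_mul 2).sub_const α
  have h2 : HasDerivAt (fun t => Real.sin (2 * t - α)) (Real.cos (2 * θ - α) * 2) θ :=
    (Real.hasDerivAt_sin _).comp θ h1
  have h3 : HasDerivAt (fun t : ℝ => t * Real.cos α / 2 + Real.sin (2 * t - α) / 4)
      (Real.cos α / 2 + Real.cos (2 * θ - α) * 2 / 4) θ := by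
    simpa using (((hasDerivAt_id θ).mul_const (Real.cos α)).div_const 2).fun_add (h2.div_const 4)
  convert h3 using 1
  have hc : Real.cos (2 * θ - α) = Real.cos θ * Real.cos (θ - α) - Real.sin θ * Real.sin (θ - α) := by
    rw [show 2 * θ - α = θ + (θ - α) by ring, Real.cos_add]
  have hc2 := Real.cos_sub θ (θ - α)
  rw [show θ - (θ - α) = α by ring] at hc2
  rw [hc]
  linarith

lemma cont_ccos (α : ℝ) : Continuous fun θ => Real.cos θ * Real.cos (θ - α) :=
  Real.continuous_cos.mul (Real.continuous_cos.comp (continuous_id.sub continuous_const))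

lemma intint_ccos (α p q : ℝ) :
    IntervalIntegrable (fun θ => Real.cos θ * Real.cos (θ - α)) volume p q :=
  (cont_ccos α).intervalIntegrable p q

lemma integral_ccos (α p q : ℝ) :
    ∫ θ in p..q, Real.cos θ * Real.cos (θ - α) =
      (q * Real.cos α / 2 + Real.sin (2 * q - α) / 4)
        - (p * Real.cos α / 2 + Real.sin (2 * p - α) / 4) :=
  integral_eq_sub_of_hasDerivAt (fun θ _ => hasDerivAt_prim α θ) (intint_ccos α p q)

lemma T1 (α : ℝ) : ∫ θ in (-π)..π, Real.cos θ * Real.cos (θ - α) = π * Real.cos α := by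
  rw [integral_ccos]
  rw [show 2 * π - α = -α + 2 * π by ring, Real.sin_add_two_pi,
    show 2 * -π - α = -α - 2 * π by ring, Real.sin_sub_two_pi]
  ring



lemma integral_antiperiodic_zero {u : ℝ → ℝ} (hu : Continuous u)
    (h : ∀ θ, u (θ - π) = -u θ) : ∫ θ in (-π)..π, u θ = 0 := by
  have h1 : IntervalIntegrable u volume (-π) 0 := hu.intervalIntegrable _ _
  have h2 : IntervalIntegrable u volume 0 π := hu.intervalIntegrable _ _
  rw [← integral_add_adjacent_intervals h1 h2]
  have key : ∫ θ in (-π)..(0:ℝ), u θ = - ∫ θ in (0:ℝ)..π, u θ := by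
    have := integral_comp_sub_right u π (a := 0) (b := π)
    simp only [h] at this
    rw [show (0:ℝ) - π = -π by ring, show π - π = (0:ℝ) by ring] at this
    rw [← this, intervalIntegral.integral_neg]
  rw [key]; ring

lemma periodic_shift {v : ℝ → ℝ} (hv : Continuous v)
    (h : ∀ θ, v (θ - π) = v θ) :
    ∫ θ in (-π)..π, v θ = 2 * ∫ θ in (-(π/2))..(π/2), v θ := by
  have ha : IntervalIntegrable v volume (-π) (-(π/2)) := hv.intervalIntegrable _ _
  have hb : IntervalIntegrable v volume (-(π/2)) (π/2) := hv.intervalIntegrable _ _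
  have hc : IntervalIntegrable v volume (π/2) π := hv.intervalIntegrable _ _
  have hd : IntervalIntegrable v volume (-(π/2)) 0 := hv.intervalIntegrable _ _
  have he : IntervalIntegrable v volume 0 (π/2) := hv.intervalIntegrable _ _
  rw [← integral_add_adjacent_intervals (ha.trans hb) hc,
    ← integral_add_adjacent_intervals ha hb]
  have k1 : ∫ θ in (-π)..(-(π/2)), v θ = ∫ θ in (0:ℝ)..(π/2), v θ := by
    have := integral_comp_sub_right v π (a := 0) (b := π/2)
    simp only [h] at this
    rw [show (0:ℝ) - π = -π by ring, show π/2 - π = -(π/2) by ring] at this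
    rw [this]
  have k2 : ∫ θ in (π/2)..π, v θ = ∫ θ in (-(π/2))..(0:ℝ), v θ := by
    have := integral_comp_sub_right v π (a := π/2) (b := π)
    simp only [h] at this
    rw [show π/2 - π = -(π/2) by ring, show π - π = (0:ℝ) by ring] at this
    rw [← this]
  rw [k1, k2]
  have k3 : (∫ θ in (-(π/2))..(0:ℝ), v θ) + ∫ θ in (0:ℝ)..(π/2), v θ
      = ∫ θ in (-(π/2))..(π/2), v θ := integral_add_adjacent_intervals hd he
  linarith

lemma cont_absabs (α : ℝ) : Continuous fun θ => |Real.cos θ| * |Real.cos (θ - α)| :=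
  (continuous_abs.comp Real.continuous_cos).mul
    ((continuous_abs.comp Real.continuous_cos).comp (continuous_id.sub continuous_const))

lemma T4 (α : ℝ) (hα : 0 ≤ α) (hαπ : α ≤ π) :
    ∫ θ in (-π)..π, |Real.cos θ| * |Real.cos (θ - α)| =
      (π - 2 * α) * Real.cos α + 2 * Real.sin α := by
  have hper : ∀ θ, |Real.cos (θ - π)| * |Real.cos (θ - π - α)| =
      |Real.cos θ| * |Real.cos (θ - α)| := by
    intro θ
    rw [Real.cos_sub_pi, show θ - π - α = (θ - α) - π by ring, Real.cos_sub_pi, abs_neg, abs_neg]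
  rw [periodic_shift (cont_absabs α) hper]
  have hs1 : -(π/2) ≤ α - π / 2 := by linarith
  have hs2 : α - π / 2 ≤ π/2 := by linarith
  have i1 : IntervalIntegrable (fun θ => |Real.cos θ| * |Real.cos (θ - α)|) volume (-(π/2)) (α - π / 2) :=
    (cont_absabs α).intervalIntegrable _ _
  have i2 : IntervalIntegrable (fun θ => |Real.cos θ| * |Real.cos (θ - α)|) volume (α - π / 2) (π/2) :=
    (cont_absabs α).intervalIntegrable _ _
  rw [← integral_add_adjacent_intervals i1 i2]
  have e1 : ∫ θ in (-(π/2))..(α - π / 2), |Real.cos θ| * |Real.cos (θ - α)|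
      = ∫ θ in (-(π/2))..(α - π / 2), -(Real.cos θ * Real.cos (θ - α)) := by
    apply intervalIntegral.integral_congr
    intro θ hθ
    rw [Set.uIcc_of_le hs1] at hθ
    obtain ⟨h1, h2⟩ := hθ
    have hc1 : 0 ≤ Real.cos θ := Real.cos_nonneg_of_mem_Icc ⟨by linarith, by linarith⟩
    have hc2 : Real.cos (θ - α) ≤ 0 := by
      rw [show θ - α = -(α - θ) by ring, Real.cos_neg]
      exact Real.cos_nonpos_of_pi_div_two_le_of_le (by linarith) (by linarith)
    simp only [abs_of_nonneg hc1, abs_of_nonpos hc2]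
    ring
  have e2 : ∫ θ in (α - π / 2)..(π/2), |Real.cos θ| * |Real.cos (θ - α)|
      = ∫ θ in (α - π / 2)..(π/2), Real.cos θ * Real.cos (θ - α) := by
    apply intervalIntegral.integral_congr
    intro θ hθ
    rw [Set.uIcc_of_le hs2] at hθ
    obtain ⟨h1, h2⟩ := hθ
    have hc1 : 0 ≤ Real.cos θ := Real.cos_nonneg_of_mem_Icc ⟨by linarith, by linarith⟩
    have hc2 : 0 ≤ Real.cos (θ - α) := Real.cos_nonneg_of_mem_Icc ⟨by linarith, by linarith⟩
    simp only [abs_of_nonneg hc1, abs_of_nonneg hc2]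
  rw [e1, e2, intervalIntegral.integral_neg, integral_ccos, integral_ccos]
  rw [show 2 * (α - π / 2) - α = -(π - α) by ring, Real.sin_neg, Real.sin_pi_sub,
    show 2 * -(π/2) - α = -(α + π) by ring, Real.sin_neg, Real.sin_add_pi,
    show 2 * (π/2) - α = π - α by ring, Real.sin_pi_sub]
  ring

lemma T2a (α : ℝ) : ∫ θ in (-π)..π, Real.cos θ * |Real.cos (θ - α)| = 0 := by
  apply integral_antiperiodic_zero
  · exact Real.continuous_cos.mul ((continuous_abs.comp Real.continuous_cos).comp
      (continuous_id.sub continuous_const))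
  · intro θ
    rw [Real.cos_sub_pi, show θ - π - α = (θ - α) - π by ring, Real.cos_sub_pi, abs_neg]
    ring

lemma T2b (α : ℝ) : ∫ θ in (-π)..π, |Real.cos θ| * Real.cos (θ - α) = 0 := by
  apply integral_antiperiodic_zero
  · exact (continuous_abs.comp Real.continuous_cos).mul (Real.continuous_cos.comp
      (continuous_id.sub continuous_const))
  · intro θ
    rw [Real.cos_sub_pi, show θ - π - α = (θ - α) - π by ring, Real.cos_sub_pi, abs_neg]
    ring

lemma ang_main (a b α : ℝ) (hα : 0 ≤ α) (hαπ : α ≤ π) :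
    ∫ θ in (-π)..π,
        (a * Real.cos θ + b * |Real.cos θ|) * (a * Real.cos (θ - α) + b * |Real.cos (θ - α)|)
      = a^2 * (π * Real.cos α) + b^2 * ((π - 2*α) * Real.cos α + 2 * Real.sin α) := by
  have c1 : Continuous fun θ => a^2 * (Real.cos θ * Real.cos (θ - α)) :=
    continuous_const.mul (cont_ccos α)
  have c2 : Continuous fun θ => (a*b) * (Real.cos θ * |Real.cos (θ - α)|) :=
    continuous_const.mul (Real.continuous_cos.mul ((continuous_abs.comp Real.continuous_cos).comp
      (continuous_id.sub continuous_const)))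
  have c3 : Continuous fun θ => (a*b) * (|Real.cos θ| * Real.cos (θ - α)) :=
    continuous_const.mul ((continuous_abs.comp Real.continuous_cos).mul (Real.continuous_cos.comp
      (continuous_id.sub continuous_const)))
  have c4 : Continuous fun θ => b^2 * (|Real.cos θ| * |Real.cos (θ - α)|) :=
    continuous_const.mul (cont_absabs α)
  have key : ∫ θ in (-π)..π,
      (a * Real.cos θ + b * |Real.cos θ|) * (a * Real.cos (θ - α) + b * |Real.cos (θ - α)|)
      = ∫ θ in (-π)..π, (a^2 * (Real.cos θ * Real.cos (θ - α))
        + ((a*b) * (Real.cos θ * |Real.cos (θ - α)|)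
        + ((a*b) * (|Real.cos θ| * Real.cos (θ - α))
        + b^2 * (|Real.cos θ| * |Real.cos (θ - α)|)))) := by
    apply intervalIntegral.integral_congr
    intro θ _
    ring
  rw [key]
  rw [intervalIntegral.integral_add (c1.intervalIntegrable _ _)
      ((c2.fun_add (c3.fun_add c4)).intervalIntegrable _ _),
    intervalIntegral.integral_add (c2.intervalIntegrable _ _)
      ((c3.fun_add c4).intervalIntegrable _ _),
    intervalIntegral.integral_add (c3.intervalIntegrable _ _) (c4.intervalIntegrable _ _),
    intervalIntegral.integral_const_mul, intervalIntegral.integral_const_mul,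
    intervalIntegral.integral_const_mul, intervalIntegral.integral_const_mul,
    T1, T2a, T2b, T4 α hα hαπ]
  ring

lemma radial_integral : ∫ r in Set.Ioi (0:ℝ), r ^ 3 * Real.exp (-r^2/2) = 2 := by
  have hderiv : ∀ r ∈ Set.Ioi (0:ℝ),
      HasDerivAt (fun r : ℝ => -((r^2+2) * Real.exp (-r^2/2))) (r^3 * Real.exp (-r^2/2)) r := by
    intro r _
    have h1 : HasDerivAt (fun r : ℝ => -r^2/2) (-(2*r^1)/2) r := (hasDerivAt_pow 2 r).neg.div_const 2
    have h1' : HasDerivAt (fun r : ℝ => -r^2/2) (-r) r := by convert h1 using 1; ring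
    have h2 : HasDerivAt (fun r : ℝ => Real.exp (-r^2/2)) (Real.exp (-r^2/2) * -r) r :=
      (Real.hasDerivAt_exp _).comp r h1'
    have h3 : HasDerivAt (fun r : ℝ => r^2+2) (2*r) r := by
      simpa using (hasDerivAt_pow 2 r).add_const 2
    have h4 := (h3.fun_mul h2).fun_neg
    exact h4.congr_deriv (by ring)
  have hcont : ContinuousWithinAt (fun r : ℝ => -((r^2+2) * Real.exp (-r^2/2))) (Set.Ici 0) 0 := by
    apply Continuous.continuousWithinAt
    have : Continuous (fun r : ℝ => -r^2/2) := by fun_prop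
    fun_prop
  have hint : IntegrableOn (fun r : ℝ => r^3 * Real.exp (-r^2/2)) (Set.Ioi 0) := by
    have h := integrableOn_rpow_mul_exp_neg_mul_sq (by norm_num : (0:ℝ) < 1/2)
      (by norm_num : (-1:ℝ) < 3)
    apply h.congr_fun ?_ measurableSet_Ioi
    intro x _
    have h3 : x ^ (3:ℝ) = x ^ (3:ℕ) := by
      rw [show (3:ℝ) = ((3:ℕ):ℝ) by norm_num, Real.rpow_natCast]
    show x ^ (3:ℝ) * Real.exp (-(1/2) * x^2) = x ^ (3:ℕ) * Real.exp (-x^2/2)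
    rw [h3, show -(1/2 : ℝ) * x^2 = -x^2/2 by ring]
  have htend : Tendsto (fun r : ℝ => -((r^2+2) * Real.exp (-r^2/2))) atTop (nhds 0) := by
    have hu : Tendsto (fun u : ℝ => (2*u+2) * Real.exp (-u)) atTop (nhds 0) := by
      have h1 := (tendsto_pow_mul_exp_neg_atTop_nhds_zero 1).const_mul (2:ℝ)
      have h2 := Real.tendsto_exp_neg_atTop_nhds_zero.const_mul (2:ℝ)
      have h3 := h1.add h2
      have h4 : Tendsto (fun x : ℝ => 2*(x^1*Real.exp (-x)) + 2*Real.exp (-x)) atTop (nhds 0) := by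
        simpa using h3
      exact h4.congr (fun x => by ring)
    have hcomp : Tendsto (fun r : ℝ => r^2/2) atTop atTop :=
      (tendsto_pow_atTop (two_ne_zero)).atTop_div_const (by norm_num)
    have := (hu.comp hcomp).neg
    rw [neg_zero] at this
    apply this.congr
    intro r
    simp only [Function.comp_apply]
    rw [show -(r^2/2) = -r^2/2 by ring]
    ring
  have := MeasureTheory.integral_Ioi_of_hasDerivAt_of_tendsto hcont hderiv hint htend
  rw [this]
  norm_num

lemma gauss_conv (g : ℝ → ℝ) :
    ∫ x, g x ∂(gaussianReal 0 1) =
      ∫ x, ((Real.sqrt (2*π))⁻¹ * Real.exp (-x^2/2)) * g x := by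
  rw [gaussianReal_of_var_ne_zero 0 one_ne_zero]
  rw [show gaussianPDF 0 1 = fun x => ((Real.toNNReal (gaussianPDFReal 0 1 x) : ℝ≥0) : ℝ≥0∞)
    from rfl]
  rw [integral_withDensity_eq_integral_smul ((measurable_gaussianPDFReal 0 1).real_toNNReal) g]
  congr 1
  funext x
  rw [NNReal.smul_def, smul_eq_mul, Real.coe_toNNReal _ (gaussianPDFReal_nonneg 0 1 x)]
  congr 1
  unfold gaussianPDFReal
  norm_num


lemma dual_value (a b ρ : ℝ) (hρl : -1 ≤ ρ) (hρr : ρ ≤ 1) :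
    dualFn (fun s => a * s + b * |s|) ρ =
      2 * ((2*π)⁻¹ * (a^2 * (π * ρ)
        + b^2 * ((π - 2 * Real.arccos ρ) * ρ + 2 * Real.sqrt (1 - ρ^2)))) := by
  have hπ : (0:ℝ) < π := Real.pi_pos
  have hα0 : 0 ≤ Real.arccos ρ := Real.arccos_nonneg ρ
  have hαπ : Real.arccos ρ ≤ π := Real.arccos_le_pi ρ
  have hcos : Real.cos (Real.arccos ρ) = ρ := Real.cos_arccos hρl hρr
  have hsin : Real.sin (Real.arccos ρ) = Real.sqrt (1 - ρ^2) := Real.sin_arccos ρ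
  have hc0 : 0 ≤ Real.sqrt (1 - ρ ^ 2) := Real.sqrt_nonneg _
  have hc1 : Real.sqrt (1 - ρ ^ 2) ≤ 1 := Real.sqrt_le_one.mpr (by nlinarith)
  have hρabs : |ρ| ≤ 1 := abs_le.mpr ⟨hρl, hρr⟩
  have hK0 : (0:ℝ) ≤ (Real.sqrt (2*π))⁻¹ := by positivity
  -- elementary bounds
  have hfb : ∀ s : ℝ, abs (a * s + b * |s|) ≤ (|a|+|b|) * |s| := by
    intro s
    have h1 := abs_add_le (a * s) (b * |s|)
    rw [abs_mul, abs_mul, abs_abs] at h1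
    calc abs (a * s + b * |s|) ≤ |a| * |s| + |b| * |s| := h1
    _ = (|a|+|b|) * |s| := by ring
  have hzb : ∀ x y : ℝ, |ρ * x + Real.sqrt (1 - ρ ^ 2) * y| ≤ |x| + |y| := by
    intro x y
    calc |ρ * x + Real.sqrt (1 - ρ ^ 2) * y| ≤ |ρ * x| + |Real.sqrt (1 - ρ ^ 2) * y| := abs_add_le _ _
    _ = |ρ| * |x| + |Real.sqrt (1 - ρ ^ 2)| * |y| := by rw [abs_mul, abs_mul]
    _ ≤ 1 * |x| + 1 * |y| := by
        apply add_le_add (mul_le_mul_of_nonneg_right hρabs (abs_nonneg x))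
        exact mul_le_mul_of_nonneg_right (by rw [abs_of_nonneg hc0]; exact hc1) (abs_nonneg y)
    _ = |x| + |y| := by ring
  -- 1D integrability
  have hI0 : Integrable (fun x : ℝ => Real.exp (-x^2/2)) := by
    have h := integrable_exp_neg_mul_sq (show (0:ℝ) < 1/2 by norm_num)
    refine h.congr (Filter.Eventually.of_forall fun x => ?_)
    show Real.exp (-(1/2) * x ^ 2) = Real.exp (-x^2/2)
    rw [show -(1/2:ℝ)*x^2 = -x^2/2 by ring]
  have hI1 : Integrable (fun x : ℝ => |x| * Real.exp (-x^2/2)) := by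
    have h := (integrable_mul_exp_neg_mul_sq (show (0:ℝ) < 1/2 by norm_num)).abs
    refine h.congr (Filter.Eventually.of_forall fun x => ?_)
    show |x * Real.exp (-(1/2) * x ^ 2)| = |x| * Real.exp (-x^2/2)
    rw [abs_mul, Real.abs_exp, show -(1/2:ℝ)*x^2 = -x^2/2 by ring]
  have hI2 : Integrable (fun x : ℝ => |x| * |x| * Real.exp (-x^2/2)) := by
    have h := integrable_rpow_mul_exp_neg_mul_sq (show (0:ℝ) < 1/2 by norm_num)
      (show (-1:ℝ) < 2 by norm_num)
    refine h.congr (Filter.Eventually.of_forall fun x => ?_)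
    have h2 : x ^ (2:ℝ) = |x| * |x| := by
      rw [show (2:ℝ) = ((2:ℕ):ℝ) by norm_num, Real.rpow_natCast, ← sq_abs, sq]
    show x ^ (2:ℝ) * Real.exp (-(1/2) * x ^ 2) = |x| * |x| * Real.exp (-x^2/2)
    rw [h2, show -(1/2:ℝ)*x^2 = -x^2/2 by ring]
  -- integrability of the 2D integrand
  have hIB : Integrable (fun p : ℝ × ℝ =>
      (((|a|+|b|) * (|a|+|b|)) * ((Real.sqrt (2*π))⁻¹ * (Real.sqrt (2*π))⁻¹)) *
        ((|p.1| * |p.1| * Real.exp (-p.1^2/2)) * Real.exp (-p.2^2/2))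
      + (((|a|+|b|) * (|a|+|b|)) * ((Real.sqrt (2*π))⁻¹ * (Real.sqrt (2*π))⁻¹)) *
        ((|p.1| * Real.exp (-p.1^2/2)) * (|p.2| * Real.exp (-p.2^2/2))))
      (volume.prod volume) :=
    ((hI2.mul_prod hI0).const_mul _).add ((hI1.mul_prod hI1).const_mul _)
  have hIF : Integrable (Function.uncurry fun x y =>
      ((Real.sqrt (2*π))⁻¹ * Real.exp (-x^2/2)) * (((Real.sqrt (2*π))⁻¹ * Real.exp (-y^2/2)) * ((a * x + b * |x|) * (a * (ρ * x + Real.sqrt (1 - ρ ^ 2) * y) + b * |ρ * x + Real.sqrt (1 - ρ ^ 2) * y|)))) (volume.prod volume) := by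
    apply hIB.mono'
    · apply Continuous.aestronglyMeasurable
      have hfc : Continuous (fun s : ℝ => a * s + b * |s|) :=
        (continuous_const.mul continuous_id).add (continuous_const.mul continuous_abs)
      have hφc : Continuous (fun x : ℝ => ((Real.sqrt (2*π))⁻¹ * Real.exp (-x^2/2))) := by
        apply continuous_const.mul
        apply Real.continuous_exp.comp
        fun_prop
      have hlin : Continuous (fun p : ℝ × ℝ => ρ * p.1 + Real.sqrt (1 - ρ ^ 2) * p.2) := by fun_prop
      exact (hφc.comp continuous_fst).mul ((hφc.comp continuous_snd).mul
        ((hfc.comp continuous_fst).mul (hfc.comp hlin)))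
    · apply Filter.Eventually.of_forall
      rintro ⟨x, y⟩
      simp only [Function.uncurry_apply_pair, Real.norm_eq_abs]
      have hEx : abs (a * x + b * |x|) ≤ (|a|+|b|) * |x| := hfb x
      have hEz : abs (a * (ρ * x + Real.sqrt (1 - ρ ^ 2) * y) + b * |ρ * x + Real.sqrt (1 - ρ ^ 2) * y|) ≤ (|a|+|b|) * (|x| + |y|) := by
        calc abs (a * (ρ * x + Real.sqrt (1 - ρ ^ 2) * y) + b * |ρ * x + Real.sqrt (1 - ρ ^ 2) * y|)
            ≤ (|a|+|b|) * |ρ * x + Real.sqrt (1 - ρ ^ 2) * y| := hfb _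
        _ ≤ (|a|+|b|) * (|x| + |y|) :=
            mul_le_mul_of_nonneg_left (hzb x y) (by positivity)
      have hφx : (0:ℝ) ≤ ((Real.sqrt (2*π))⁻¹ * Real.exp (-x^2/2)) := by positivity
      have hφy : (0:ℝ) ≤ ((Real.sqrt (2*π))⁻¹ * Real.exp (-y^2/2)) := by positivity
      calc abs (((Real.sqrt (2*π))⁻¹ * Real.exp (-x^2/2)) * (((Real.sqrt (2*π))⁻¹ * Real.exp (-y^2/2)) * ((a * x + b * |x|) * (a * (ρ * x + Real.sqrt (1 - ρ ^ 2) * y) + b * |ρ * x + Real.sqrt (1 - ρ ^ 2) * y|))))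
          = ((Real.sqrt (2*π))⁻¹ * Real.exp (-x^2/2)) * ((Real.sqrt (2*π))⁻¹ * Real.exp (-y^2/2)) *
              (abs (a * x + b * |x|) * abs (a * (ρ * x + Real.sqrt (1 - ρ ^ 2) * y) + b * |ρ * x + Real.sqrt (1 - ρ ^ 2) * y|)) := by
            simp only [abs_mul, Real.abs_exp, abs_of_nonneg hK0]
            ring
      _ ≤ ((Real.sqrt (2*π))⁻¹ * Real.exp (-x^2/2)) * ((Real.sqrt (2*π))⁻¹ * Real.exp (-y^2/2)) * (((|a|+|b|) * |x|) * ((|a|+|b|) * (|x| + |y|))) := by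
            apply mul_le_mul_of_nonneg_left _ (by positivity)
            exact mul_le_mul hEx hEz (abs_nonneg _) (by positivity)
      _ = (((|a|+|b|) * (|a|+|b|)) * ((Real.sqrt (2*π))⁻¹ * (Real.sqrt (2*π))⁻¹)) *
            ((|x| * |x| * Real.exp (-x^2/2)) * Real.exp (-y^2/2))
          + (((|a|+|b|) * (|a|+|b|)) * ((Real.sqrt (2*π))⁻¹ * (Real.sqrt (2*π))⁻¹)) *
            ((|x| * Real.exp (-x^2/2)) * (|y| * Real.exp (-y^2/2))) := by ring
  -- auxiliary identities for the polar step
  have hk : (Real.sqrt (2*π))⁻¹ * (Real.sqrt (2*π))⁻¹ = (2*π)⁻¹ := by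
    rw [← mul_inv, Real.mul_self_sqrt (by positivity)]
  -- the main chain
  calc dualFn (fun s => a * s + b * |s|) ρ
      = ∫ x, ∫ y, (a * x + b * |x|) * (a * (ρ * x + Real.sqrt (1 - ρ ^ 2) * y) + b * |ρ * x + Real.sqrt (1 - ρ ^ 2) * y|) ∂(gaussianReal 0 1) ∂(gaussianReal 0 1) := rfl
  _ = ∫ x, (∫ y, ((Real.sqrt (2*π))⁻¹ * Real.exp (-y^2/2)) * ((a * x + b * |x|) * (a * (ρ * x + Real.sqrt (1 - ρ ^ 2) * y) + b * |ρ * x + Real.sqrt (1 - ρ ^ 2) * y|))) ∂(gaussianReal 0 1) := by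
      congr 1
      funext x
      exact gauss_conv _
  _ = ∫ x, ((Real.sqrt (2*π))⁻¹ * Real.exp (-x^2/2)) * ∫ y, ((Real.sqrt (2*π))⁻¹ * Real.exp (-y^2/2)) * ((a * x + b * |x|) * (a * (ρ * x + Real.sqrt (1 - ρ ^ 2) * y) + b * |ρ * x + Real.sqrt (1 - ρ ^ 2) * y|)) := gauss_conv _
  _ = ∫ x, ∫ y, ((Real.sqrt (2*π))⁻¹ * Real.exp (-x^2/2)) * (((Real.sqrt (2*π))⁻¹ * Real.exp (-y^2/2)) * ((a * x + b * |x|) * (a * (ρ * x + Real.sqrt (1 - ρ ^ 2) * y) + b * |ρ * x + Real.sqrt (1 - ρ ^ 2) * y|))) := by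
      congr 1
      funext x
      exact (MeasureTheory.integral_const_mul _ _).symm
  _ = ∫ p : ℝ × ℝ, ((Real.sqrt (2*π))⁻¹ * Real.exp (-p.1^2/2)) * (((Real.sqrt (2*π))⁻¹ * Real.exp (-p.2^2/2)) * ((a * p.1 + b * |p.1|) * (a * (ρ * p.1 + Real.sqrt (1 - ρ ^ 2) * p.2) + b * |ρ * p.1 + Real.sqrt (1 - ρ ^ 2) * p.2|))) ∂(volume.prod volume) :=
      MeasureTheory.integral_integral hIF
  _ = ∫ p : ℝ × ℝ, ((Real.sqrt (2*π))⁻¹ * Real.exp (-p.1^2/2)) * (((Real.sqrt (2*π))⁻¹ * Real.exp (-p.2^2/2)) * ((a * p.1 + b * |p.1|) * (a * (ρ * p.1 + Real.sqrt (1 - ρ ^ 2) * p.2) + b * |ρ * p.1 + Real.sqrt (1 - ρ ^ 2) * p.2|))) := by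
      rw [← Measure.volume_eq_prod]
  _ = ∫ p in polarCoord.target, p.1 •
        (((Real.sqrt (2*π))⁻¹ * Real.exp (-(polarCoord.symm p).1^2/2)) * (((Real.sqrt (2*π))⁻¹ * Real.exp (-(polarCoord.symm p).2^2/2)) *
          ((a * (polarCoord.symm p).1 + b * |(polarCoord.symm p).1|) * (a * (ρ * (polarCoord.symm p).1 + Real.sqrt (1 - ρ ^ 2) * (polarCoord.symm p).2) + b * |ρ * (polarCoord.symm p).1 + Real.sqrt (1 - ρ ^ 2) * (polarCoord.symm p).2|)))) :=
      (integral_comp_polarCoord_symm (fun p : ℝ × ℝ =>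
        ((Real.sqrt (2*π))⁻¹ * Real.exp (-p.1^2/2)) * (((Real.sqrt (2*π))⁻¹ * Real.exp (-p.2^2/2)) * ((a * p.1 + b * |p.1|) * (a * (ρ * p.1 + Real.sqrt (1 - ρ ^ 2) * p.2) + b * |ρ * p.1 + Real.sqrt (1 - ρ ^ 2) * p.2|))))).symm
  _ = ∫ p in Set.Ioi (0:ℝ) ×ˢ Set.Ioo (-π) π,
        (p.1 ^ 3 * Real.exp (-p.1^2/2)) * ((2*π)⁻¹ *
          ((a * Real.cos p.2 + b * |Real.cos p.2|) * (a * Real.cos (p.2 - Real.arccos ρ) + b * |Real.cos (p.2 - Real.arccos ρ)|))) := by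
      rw [polarCoord_target]
      apply setIntegral_congr_fun (measurableSet_Ioi.prod measurableSet_Ioo)
      rintro ⟨r, θ⟩ ⟨hr, hθ⟩
      have hr' : (0:ℝ) < r := hr
      simp only [polarCoord_symm_apply, smul_eq_mul]
      rw [show ρ * (r * Real.cos θ) + Real.sqrt (1 - ρ ^ 2) * (r * Real.sin θ)
          = r * Real.cos (θ - Real.arccos ρ) by rw [Real.cos_sub, hcos, hsin]; ring]
      simp only [abs_mul, abs_of_pos hr']
      have he : Real.exp (-(r * Real.cos θ)^2/2) * Real.exp (-(r * Real.sin θ)^2/2)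
          = Real.exp (-r^2/2) := by
        rw [← Real.exp_add]
        congr 1
        linear_combination (-(r^2)/2) * Real.sin_sq_add_cos_sq θ
      rw [← hk, ← he]
      ring
  _ = (∫ r in Set.Ioi (0:ℝ), r ^ 3 * Real.exp (-r^2/2)) *
        ∫ θ in Set.Ioo (-π) π, (2*π)⁻¹ * ((a * Real.cos θ + b * |Real.cos θ|) * (a * Real.cos (θ - Real.arccos ρ) + b * |Real.cos (θ - Real.arccos ρ)|)) := by
      rw [Measure.volume_eq_prod, ← Measure.prod_restrict]
      exact MeasureTheory.integral_prod_mul (L := ℝ) (fun r : ℝ => r ^ 3 * Real.exp (-r^2/2))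
        (fun θ : ℝ => (2*π)⁻¹ * ((a * Real.cos θ + b * |Real.cos θ|) *
          (a * Real.cos (θ - Real.arccos ρ) + b * |Real.cos (θ - Real.arccos ρ)|)))
  _ = 2 * ((2*π)⁻¹ * (a^2 * (π * ρ)
        + b^2 * ((π - 2 * Real.arccos ρ) * ρ + 2 * Real.sqrt (1 - ρ^2)))) := by
      rw [radial_integral, MeasureTheory.integral_const_mul]
      congr 2
      rw [← MeasureTheory.integral_Ioc_eq_integral_Ioo,
        ← intervalIntegral.integral_of_le (by linarith : -π ≤ π)]
      rw [ang_main a b (Real.arccos ρ) hα0 hαπ, hcos, hsin]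

theorem sigma_sq_dual_abReLU (a b : ℝ) (hab : 0 < a ^ 2 + b ^ 2)
    (ρ : ℝ) (hρ : ρ ∈ Set.Icc (-1 : ℝ) 1) :
    (a ^ 2 + b ^ 2)⁻¹ * dualFn (fun s => a * s + b * |s|) ρ =
      ρ + (b ^ 2 / (a ^ 2 + b ^ 2)) * (2 / π) *
        (Real.sqrt (1 - ρ ^ 2) - ρ * Real.arccos ρ) := by
  obtain ⟨hρl, hρr⟩ := hρ
  rw [dual_value a b ρ hρl hρr]
  have h1 : a ^ 2 + b ^ 2 ≠ 0 := ne_of_gt hab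
  have h2 : (π : ℝ) ≠ 0 := Real.pi_ne_zero
  field_simp
  ring
end
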